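/- Let ψ : ℝ → ℝⁿ be C² with ψ ∈ L², ψ′ ∈ L², and suppose there are C_ψ > 0, a > 0 with |ψ''(ξ)| ≤ C_ψ e^{−a|ξ|} for all ξ ∈ ℝ. Define N(γ)(ξ) = ψ(ξ − γ) − ψ(ξ) + γψ′(ξ). Then there exists K > 0 such that ‖N(γ)‖_{L²} ≤ Kγ² for all γ ∈ ℝ, and ‖N(γ_A) − N(γ_B)‖_{L²} ≤ K(|γ_A| + |γ_B|)|γ_A − γ_B| for all γ_A, γ_B ∈ ℝ. -/

import Mathlib

open MeasureTheory

noncomputable section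

abbrev En (n : ℕ) : Type := EuclideanSpace ℝ (Fin n)

/-- membership in `L²(ℝ;ℝⁿ)` -/
def memL2 {n : ℕ} (f : ℝ → En n) : Prop := MemLp f 2 volume

/-- the `L²` norm -/
def l2norm {n : ℕ} (f : ℝ → En n) : ℝ := (eLpNorm f 2 volume).toReal

/-- the `L²` inner product -/
def l2inner {n : ℕ} (f g : ℝ → En n) : ℝ := ∫ ξ, (inner ℝ (f ξ) (g ξ) : ℝ)

/-- `f` is locally absolutely continuous with derivative `f'` -/
def hasWeakDeriv {n : ℕ} (f f' : ℝ → En n) : Prop :=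
  LocallyIntegrable f' volume ∧ ∀ x y : ℝ, f y - f x = ∫ t in x..y, f' t

/-- membership in `H¹`, with the derivative recorded explicitly -/
def memH1 {n : ℕ} (f f' : ℝ → En n) : Prop :=
  hasWeakDeriv f f' ∧ memL2 f ∧ memL2 f'

/-- the `H¹` norm -/
def h1norm {n : ℕ} (f f' : ℝ → En n) : ℝ :=
  Real.sqrt ((l2norm f)^2 + (l2norm f')^2)

/-- membership in `H²`, with both derivatives recorded explicitly -/
def memH2 {n : ℕ} (f f' f'' : ℝ → En n) : Prop :=
  memH1 f f' ∧ memH1 f' f''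

/-- the `H²` norm -/
def h2norm {n : ℕ} (f f' f'' : ℝ → En n) : ℝ :=
  Real.sqrt ((l2norm f)^2 + (l2norm f')^2 + (l2norm f'')^2)

section Helpers

open Real Set Filter
open scoped ENNReal Topology

lemma int_exp_abs {b : ℝ} (hb : 0 < b) : Integrable (fun x : ℝ => Real.exp (-b * |x|)) volume := by
  have h1 : IntegrableOn (fun x : ℝ => Real.exp (-b * |x|)) (Ioi 0) volume := by
    refine (exp_neg_integrableOn_Ioi 0 hb).congr_fun ?_ measurableSet_Ioi
    intro x hx; simp [abs_of_pos (mem_Ioi.mp hx)]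
  rw [← integrableOn_univ, ← @Iio_union_Ici _ _ (0 : ℝ), integrableOn_union,
    integrableOn_Ici_iff_integrableOn_Ioi]
  refine ⟨?_, h1⟩
  rw [← (Measure.measurePreserving_neg (volume : Measure ℝ)).integrableOn_comp_preimage
      (Homeomorph.neg ℝ).measurableEmbedding]
  simp only [Function.comp_def, abs_neg, neg_preimage, neg_Iio, neg_zero]
  exact h1

lemma memL2_exp_shift {b : ℝ} (hb : 0 < b) (γ : ℝ) :
    MemLp (fun x : ℝ => Real.exp (-b * |x - γ|)) 2 volume := by
  have hc : Continuous fun x : ℝ => Real.exp (-b * |x - γ|) := by continuity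
  rw [memLp_two_iff_integrable_sq hc.aestronglyMeasurable]
  have he : ∀ x : ℝ, Real.exp (-b * |x - γ|) ^ 2 = Real.exp (-(2*b) * |x - γ|) := by
    intro x; rw [← Real.exp_nat_mul]; ring_nf
  simp only [he]
  exact (int_exp_abs (by linarith : (0:ℝ) < 2*b)).comp_sub_right γ

lemma eLpNorm_exp_shift {b : ℝ} (γ : ℝ) :
    eLpNorm (fun x : ℝ => Real.exp (-b * |x - γ|)) 2 volume
      = eLpNorm (fun x : ℝ => Real.exp (-b * |x|)) 2 volume := by
  have hc : Continuous fun x : ℝ => Real.exp (-b * |x|) := by continuity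
  have h := eLpNorm_comp_measurePreserving (p := 2) (f := fun x : ℝ => x - γ)
    hc.aestronglyMeasurable (measurePreserving_sub_right volume γ)
  rw [← h]; rfl

lemma toReal_eLpNorm_add_le {f g : ℝ → ℝ} (hf : MemLp f 2 volume) (hg : MemLp g 2 volume) :
    (eLpNorm (fun x => f x + g x) 2 volume).toReal
      ≤ (eLpNorm f 2 volume).toReal + (eLpNorm g 2 volume).toReal := by
  have h := eLpNorm_add_le hf.1 hg.1 (by norm_num : (1:ℝ≥0∞) ≤ 2)
  calc (eLpNorm (fun x => f x + g x) 2 volume).toReal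
      ≤ (eLpNorm f 2 volume + eLpNorm g 2 volume).toReal :=
        ENNReal.toReal_mono (ENNReal.add_ne_top.mpr ⟨hf.2.ne, hg.2.ne⟩) h
    _ = _ := ENNReal.toReal_add hf.2.ne hg.2.ne

lemma l2norm_le_of_bound {E : Type*} [NormedAddCommGroup E] {F : ℝ → E} {G : ℝ → ℝ}
    (hG : MemLp G 2 volume) (h : ∀ x, ‖F x‖ ≤ G x) :
    (eLpNorm F 2 volume).toReal ≤ (eLpNorm G 2 volume).toReal :=
  ENNReal.toReal_mono hG.2.ne (eLpNorm_mono_real h)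

lemma l2_smul (c : ℝ) (G : ℝ → ℝ) :
    (eLpNorm (fun x => c * G x) 2 volume).toReal = |c| * (eLpNorm G 2 volume).toReal := by
  have h : (fun x => c * G x) = c • G := rfl
  rw [h, eLpNorm_const_smul]
  simp [ENNReal.toReal_smul, Real.norm_eq_abs]

lemma limit_zero_of_memL2 {E : Type*} [NormedAddCommGroup E] {f : ℝ → E}
    (hf : MemLp f 2 volume) {l : E} (h : Tendsto f atTop (𝓝 l)) : l = 0 := by
  by_contra hl
  have hpos : 0 < ‖l‖ / 2 := by
    have := norm_pos_iff.mpr hl; linarith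
  obtain ⟨R, hR⟩ : ∃ R : ℝ, ∀ x ≥ R, ‖l‖ / 2 ≤ ‖f x‖ := by
    have h1 : Tendsto (fun x => ‖f x‖) atTop (𝓝 ‖l‖) := h.norm
    have h2 := h1.eventually (eventually_ge_nhds (by linarith : ‖l‖ / 2 < ‖l‖))
    exact eventually_atTop.mp h2
  have hint : Integrable (fun x => ‖f x‖ ^ (2:ℝ)) volume := by
    have := hf.integrable_norm_rpow (by norm_num) (by norm_num)
    simpa using this
  have hconst : IntegrableOn (fun _ : ℝ => (‖l‖ / 2) ^ (2:ℝ)) (Ici R) volume := by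
    refine Integrable.mono' hint.integrableOn aestronglyMeasurable_const ?_
    filter_upwards [ae_restrict_mem measurableSet_Ici] with x hx
    rw [Real.norm_eq_abs, abs_of_nonneg (by positivity)]
    exact Real.rpow_le_rpow (by positivity) (hR x hx) (by norm_num)
  rw [integrableOn_const_iff] at hconst
  rcases hconst with h0 | htop
  · have : (0:ℝ) < (‖l‖ / 2) ^ (2:ℝ) := Real.rpow_pos_of_pos hpos 2
    exact absurd (enorm_eq_zero.mp h0) this.ne'
  · rw [Real.volume_Ici] at htop; exact (lt_irrefl _ htop).elim

lemma integral_exp_neg_mul_Ioi {b : ℝ} (hb : 0 < b) (ξ : ℝ) :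
    ∫ t in Ioi ξ, Real.exp (-b * t) = Real.exp (-b * ξ) / b := by
  have hderiv : ∀ x ∈ Ici ξ, HasDerivAt (fun t => -(Real.exp (-b * t) / b)) (Real.exp (-b * x)) x := by
    intro x _
    have h1 : HasDerivAt (fun t : ℝ => -b * t) (-b) x := by
      simpa using (hasDerivAt_id x).const_mul (-b)
    have h2 := (Real.hasDerivAt_exp (-b * x)).comp x h1
    have h3 := (h2.div_const b).neg
    rw [mul_neg, neg_div, neg_neg, mul_div_assoc, div_self hb.ne', mul_one] at h3
    exact h3
  have hint : IntegrableOn (fun t => Real.exp (-b * t)) (Ioi ξ) volume :=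
    exp_neg_integrableOn_Ioi ξ hb
  have htend : Tendsto (fun t => -(Real.exp (-b * t) / b)) atTop (𝓝 0) := by
    have h1 : Tendsto (fun t : ℝ => b * t) atTop atTop :=
      Tendsto.const_mul_atTop hb tendsto_id
    have h2 : Tendsto (fun t : ℝ => Real.exp (-b * t)) atTop (𝓝 0) := by
      refine (Real.tendsto_exp_atBot.comp (tendsto_neg_atTop_atBot.comp h1)).congr fun t => ?_
      simp [Function.comp, neg_mul]
    have := (h2.div_const b).neg
    simpa using this
  have := integral_Ioi_of_hasDerivAt_of_tendsto' hderiv hint htend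
  rw [this]; ring

lemma decay_aux {n : ℕ} (g : ℝ → EuclideanSpace ℝ (Fin n)) (hg : ContDiff ℝ 1 g)
    (hgL2 : MemLp g 2 volume) {C b : ℝ} (hb : 0 < b)
    (hd : ∀ t, ‖deriv g t‖ ≤ C * Real.exp (-b * |t|)) :
    ∀ ξ : ℝ, 0 ≤ ξ → ‖g ξ‖ ≤ C / b * Real.exp (-b * ξ) := by
  have hC : 0 ≤ C := by
    have := (norm_nonneg (deriv g 0)).trans (hd 0)
    simpa using this
  have hcont : Continuous (deriv g) := hg.continuous_deriv le_rfl
  have hdiff : Differentiable ℝ g := hg.differentiable one_ne_zero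
  have hbnd : ∀ t : ℝ, ‖deriv g t‖ ≤ C * Real.exp (-b * t) := by
    intro t
    refine (hd t).trans (mul_le_mul_of_nonneg_left ?_ hC)
    exact Real.exp_le_exp.mpr (by nlinarith [le_abs_self t, hb.le])
  have hint : Integrable (deriv g) volume := by
    refine Integrable.mono' ((int_exp_abs hb).const_mul C) hcont.aestronglyMeasurable ?_
    exact Eventually.of_forall hd
  intro ξ hξ
  have hFTC : ∀ y : ℝ, g y - g ξ = ∫ t in ξ..y, deriv g t := by
    intro y
    rw [intervalIntegral.integral_deriv_eq_sub (fun t _ => hdiff t) hint.intervalIntegrable]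
  have htendI : Tendsto (fun y => ∫ t in ξ..y, deriv g t) atTop
      (𝓝 (∫ t in Ioi ξ, deriv g t)) :=
    intervalIntegral_tendsto_integral_Ioi ξ hint.integrableOn tendsto_id
  have htendg : Tendsto g atTop (𝓝 (g ξ + ∫ t in Ioi ξ, deriv g t)) := by
    have := Tendsto.add (tendsto_const_nhds : Tendsto (fun _ : ℝ => g ξ) atTop (𝓝 (g ξ))) htendI
    refine this.congr fun y => ?_
    rw [← hFTC y]; abel
  have hzero : g ξ + ∫ t in Ioi ξ, deriv g t = 0 := limit_zero_of_memL2 hgL2 htendg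
  have hgξ : g ξ = -∫ t in Ioi ξ, deriv g t := by
    rw [eq_neg_iff_add_eq_zero]; exact hzero
  rw [hgξ, norm_neg]
  have hle : ‖∫ t in Ioi ξ, deriv g t‖ ≤ ∫ t in Ioi ξ, C * Real.exp (-b * t) := by
    refine norm_integral_le_of_norm_le ((exp_neg_integrableOn_Ioi ξ hb).const_mul C) ?_
    exact Eventually.of_forall fun t => hbnd t
  refine hle.trans ?_
  rw [MeasureTheory.integral_const_mul, integral_exp_neg_mul_Ioi hb ξ]
  rw [div_mul_eq_mul_div, mul_div_assoc]

lemma decay {n : ℕ} (g : ℝ → EuclideanSpace ℝ (Fin n)) (hg : ContDiff ℝ 1 g)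
    (hgL2 : MemLp g 2 volume) {C b : ℝ} (hb : 0 < b)
    (hd : ∀ t, ‖deriv g t‖ ≤ C * Real.exp (-b * |t|)) :
    ∀ ξ : ℝ, ‖g ξ‖ ≤ C / b * Real.exp (-b * |ξ|) := by
  intro ξ
  rcases le_or_gt 0 ξ with hξ | hξ
  · rw [abs_of_nonneg hξ]; exact decay_aux g hg hgL2 hb hd ξ hξ
  · have hg2C : ContDiff ℝ 1 (fun x => g (-x)) := hg.comp contDiff_neg
    have hg2L2 : MemLp (fun x => g (-x)) 2 volume :=
      hgL2.comp_measurePreserving (Measure.measurePreserving_neg volume)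
    have hd2 : ∀ t, ‖deriv (fun x => g (-x)) t‖ ≤ C * Real.exp (-b * |t|) := by
      intro t; rw [deriv_comp_neg, norm_neg]
      simpa [abs_neg] using hd (-t)
    have h := decay_aux (fun x => g (-x)) hg2C hg2L2 hb hd2 (-ξ) (by linarith)
    rw [abs_of_neg hξ]
    simpa using h

end Helpers

open Real Set Filter
open scoped ENNReal Topology

set_option maxHeartbeats 1000000 in
/-- quadratic bounds for `N(γ) = ψ(·−γ) − ψ + γψ′`. -/
theorem statement11 {n : ℕ} (ψ : ℝ → En n) (hψC2 : ContDiff ℝ 2 ψ)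
    (hψL2 : memL2 ψ) (hψ'L2 : memL2 (deriv ψ))
    (Cψ a : ℝ) (hCψ : 0 < Cψ) (ha : 0 < a)
    (hdecay : ∀ ξ : ℝ, ‖deriv (deriv ψ) ξ‖ ≤ Cψ * Real.exp (-a * |ξ|)) :
    ∃ K > (0:ℝ),
      (∀ γ : ℝ, l2norm (fun ξ => ψ (ξ - γ) - ψ ξ + γ • deriv ψ ξ) ≤ K * γ^2) ∧
      (∀ γA γB : ℝ,
        l2norm (fun ξ => (ψ (ξ - γA) - ψ ξ + γA • deriv ψ ξ)
            - (ψ (ξ - γB) - ψ ξ + γB • deriv ψ ξ)) ≤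
          K * (|γA| + |γB|) * |γA - γB|) := by
  classical
  have hψdiff : Differentiable ℝ ψ := hψC2.differentiable two_ne_zero
  have hψC2' : ContDiff ℝ ((1:WithTop ℕ∞) + 1) ψ := by
    have h12 : ((1:WithTop ℕ∞) + 1) = 2 := one_add_one_eq_two
    rw [h12]; exact hψC2
  have hφC1 : ContDiff ℝ 1 (deriv ψ) := (contDiff_succ_iff_deriv.mp hψC2').2.2
  have hφdiff : Differentiable ℝ (deriv ψ) := hφC1.differentiable one_ne_zero
  set M := Cψ / a with hM
  have hMpos : 0 < M := div_pos hCψ ha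
  have hφdecay : ∀ ξ, ‖deriv ψ ξ‖ ≤ M * Real.exp (-a * |ξ|) :=
    decay (deriv ψ) hφC1 hψ'L2 ha hdecay
  set E := (eLpNorm (fun x : ℝ => Real.exp (-a * |x|)) 2 volume).toReal with hE
  have hEmem : MemLp (fun x : ℝ => Real.exp (-a * |x|)) 2 volume := by
    simpa using memL2_exp_shift ha 0
  have hEnn : 0 ≤ E := ENNReal.toReal_nonneg
  set K := Cψ * Real.exp a * E + M * (3 * E + 1) + 1 with hK
  have hKpos : 0 < K := by positivity
  have main : ∀ γA γB : ℝ,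
      l2norm (fun ξ => (ψ (ξ - γA) - ψ ξ + γA • deriv ψ ξ)
          - (ψ (ξ - γB) - ψ ξ + γB • deriv ψ ξ)) ≤
        K * (|γA| + |γB|) * |γA - γB| := by
    intro γA γB
    set S := |γA| + |γB| with hS
    set L := |γA - γB| with hL
    have hSnn : 0 ≤ S := by positivity
    have hLnn : 0 ≤ L := abs_nonneg _
    have hLS : L ≤ S := abs_sub γA γB
    have hFeq : (fun ξ => (ψ (ξ - γA) - ψ ξ + γA • deriv ψ ξ)
          - (ψ (ξ - γB) - ψ ξ + γB • deriv ψ ξ))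
        = fun ξ => ψ (ξ - γA) - ψ (ξ - γB) + (γA - γB) • deriv ψ ξ := by
      funext ξ; rw [sub_smul]; abel
    rw [l2norm, hFeq]
    -- derivative facts
    have hderψ : ∀ ξ t : ℝ, HasDerivAt (fun u => ψ (ξ - u)) (-(deriv ψ (ξ - t))) t := by
      intro ξ t
      have h1 : HasDerivAt (fun u : ℝ => ξ - u) (-1) t := by
        exact (hasDerivAt_id' t).const_sub ξ
      have h2 := HasDerivAt.scomp t (hψdiff (ξ - t)).hasDerivAt h1
      rw [neg_one_smul] at h2; exact h2
    have hderφ : ∀ ξ t : ℝ, HasDerivAt (fun u => deriv ψ (ξ - u)) (-(deriv (deriv ψ) (ξ - t))) t := by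
      intro ξ t
      have h1 : HasDerivAt (fun u : ℝ => ξ - u) (-1) t := by
        exact (hasDerivAt_id' t).const_sub ξ
      have h2 := HasDerivAt.scomp t (hφdiff (ξ - t)).hasDerivAt h1
      rw [neg_one_smul] at h2; exact h2
    rcases le_or_gt S 1 with hS1 | hS1
    · -- small case
      have hpt : ∀ ξ, ‖ψ (ξ - γA) - ψ (ξ - γB) + (γA - γB) • deriv ψ ξ‖
          ≤ (Cψ * Real.exp a * S * L) * Real.exp (-a * |ξ|) := by
        intro ξ
        set C₁ := Cψ * Real.exp a * Real.exp (-a * |ξ|) with hC₁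
        have hC₁nn : 0 ≤ C₁ := by positivity
        have hinner : ∀ s ∈ Icc (-S) S, ‖deriv ψ ξ - deriv ψ (ξ - s)‖ ≤ C₁ * S := by
          intro s hs
          have hbound : ∀ t ∈ Icc (-(1:ℝ)) 1, ‖deriv (fun u => deriv ψ (ξ - u)) t‖ ≤ C₁ := by
            intro t ht
            rw [(hderφ ξ t).deriv, norm_neg]
            refine (hdecay (ξ - t)).trans ?_
            rw [hC₁, mul_assoc, ← Real.exp_add]
            refine mul_le_mul_of_nonneg_left (Real.exp_le_exp.mpr ?_) hCψ.le
            have h1 : |ξ| - |ξ - t| ≤ |t| := by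
              have := abs_sub_abs_le_abs_sub ξ (ξ - t)
              simpa using this
            have h2 : |t| ≤ 1 := abs_le.mpr ⟨ht.1, ht.2⟩
            nlinarith [ha.le]
          have hdf : ∀ t ∈ Icc (-(1:ℝ)) 1, DifferentiableAt ℝ (fun u => deriv ψ (ξ - u)) t :=
            fun t _ => (hderφ ξ t).differentiableAt
          have hmem0 : (0:ℝ) ∈ Icc (-(1:ℝ)) 1 := by norm_num
          have hmems : s ∈ Icc (-(1:ℝ)) 1 := by
            constructor
            · linarith [hs.1]
            · linarith [hs.2]
          have hmvt := Convex.norm_image_sub_le_of_norm_deriv_le hdf hbound (convex_Icc _ _) hmem0 hmems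
          simp only [sub_zero] at hmvt
          have habs : |s| ≤ S := abs_le.mpr ⟨hs.1, hs.2⟩
          calc ‖deriv ψ ξ - deriv ψ (ξ - s)‖
              = ‖deriv ψ (ξ - s) - deriv ψ ξ‖ := by rw [norm_sub_rev]
            _ ≤ C₁ * ‖s‖ := hmvt
            _ ≤ C₁ * S := by
                refine mul_le_mul_of_nonneg_left ?_ hC₁nn
                simpa [Real.norm_eq_abs] using habs
        have hderG : ∀ t : ℝ, HasDerivAt (fun s => ψ (ξ - s) + s • deriv ψ ξ)
            (-(deriv ψ (ξ - t)) + deriv ψ ξ) t := by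
          intro t
          have h2 : HasDerivAt (fun s : ℝ => s • deriv ψ ξ) ((1:ℝ) • deriv ψ ξ) t :=
            (hasDerivAt_id t).smul_const (deriv ψ ξ)
          have := (hderψ ξ t).add h2
          rw [one_smul] at this; exact this
        have hboundG : ∀ t ∈ Icc (-S) S,
            ‖deriv (fun s => ψ (ξ - s) + s • deriv ψ ξ) t‖ ≤ C₁ * S := by
          intro t ht
          rw [(hderG t).deriv]
          have heq : -(deriv ψ (ξ - t)) + deriv ψ ξ = deriv ψ ξ - deriv ψ (ξ - t) := by abel
          rw [heq]
          exact hinner t ht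
        have hdfG : ∀ t ∈ Icc (-S) S,
            DifferentiableAt ℝ (fun s => ψ (ξ - s) + s • deriv ψ ξ) t :=
          fun t _ => (hderG t).differentiableAt
        have hmemA : γA ∈ Icc (-S) S := by
          constructor
          · have h1 := neg_abs_le γA; have h2 := abs_nonneg γB; rw [hS]; linarith
          · have h1 := le_abs_self γA; have h2 := abs_nonneg γB; rw [hS]; linarith
        have hmemB : γB ∈ Icc (-S) S := by
          constructor
          · have h1 := neg_abs_le γB; have h2 := abs_nonneg γA; rw [hS]; linarith
          · have h1 := le_abs_self γB; have h2 := abs_nonneg γA; rw [hS]; linarith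
        have hmvt := Convex.norm_image_sub_le_of_norm_deriv_le hdfG hboundG (convex_Icc _ _) hmemB hmemA
        have hGval : (fun s => ψ (ξ - s) + s • deriv ψ ξ) γA
            - (fun s => ψ (ξ - s) + s • deriv ψ ξ) γB
            = ψ (ξ - γA) - ψ (ξ - γB) + (γA - γB) • deriv ψ ξ := by
          simp only [sub_smul]; abel
        rw [hGval] at hmvt
        refine hmvt.trans ?_
        have hnrm : ‖γA - γB‖ = L := by rw [Real.norm_eq_abs, hL]
        rw [hnrm, hC₁]
        have : Cψ * Real.exp a * Real.exp (-a * |ξ|) * S * L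
            = Cψ * Real.exp a * S * L * Real.exp (-a * |ξ|) := by ring
        linarith [this.le]
      have hmemc : MemLp (fun ξ : ℝ => (Cψ * Real.exp a * S * L) * Real.exp (-a * |ξ|)) 2 volume :=
        hEmem.const_mul _
      have h1 := l2norm_le_of_bound hmemc hpt
      refine h1.trans ?_
      rw [l2_smul, ← hE]
      have habs : |Cψ * Real.exp a * S * L| = Cψ * Real.exp a * S * L := by
        rw [abs_of_nonneg]; positivity
      rw [habs]
      have hKge : Cψ * Real.exp a * E ≤ K := by
        rw [hK]; nlinarith [Real.exp_pos a, hMpos, hEnn]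
      calc Cψ * Real.exp a * S * L * E = (Cψ * Real.exp a * E) * S * L := by ring
        _ ≤ K * S * L := by
            refine mul_le_mul_of_nonneg_right (mul_le_mul_of_nonneg_right hKge hSnn) hLnn
    · -- large case : 1 < S
      set I : Set ℝ := Icc (min γA γB) (max γA γB) with hI
      have hmemA : γA ∈ I := ⟨min_le_left _ _, le_max_left _ _⟩
      have hmemB : γB ∈ I := ⟨min_le_right _ _, le_max_right _ _⟩
      set D3 : ℝ → ℝ := fun ξ => Real.exp (-a * |ξ - γA|) + Real.exp (-a * |ξ - γB|)
        + I.indicator (fun _ => (1:ℝ)) ξ with hD3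
      have hindnn : ∀ ξ, 0 ≤ I.indicator (fun _ => (1:ℝ)) ξ :=
        fun ξ => Set.indicator_nonneg (fun _ _ => zero_le_one) ξ
      have hD3ge : ∀ ξ, ∀ s ∈ I, Real.exp (-a * |ξ - s|) ≤ D3 ξ := by
        intro ξ s hs
        have hcore : ∀ c, (c = γA ∨ c = γB) → |ξ - c| ≤ |ξ - s| →
            Real.exp (-a * |ξ - s|) ≤ D3 ξ := by
          intro c hc hle
          have h1 : Real.exp (-a * |ξ - s|) ≤ Real.exp (-a * |ξ - c|) :=
            Real.exp_le_exp.mpr (by nlinarith [ha.le])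
          rcases hc with rfl | rfl
          · rw [hD3]
            have := Real.exp_pos (-a * |ξ - γB|)
            have := hindnn ξ
            dsimp only
            linarith
          · rw [hD3]
            have := Real.exp_pos (-a * |ξ - γA|)
            have := hindnn ξ
            dsimp only
            linarith
        by_cases hξI : ξ ∈ I
        · have h1 : Real.exp (-a * |ξ - s|) ≤ 1 := by
            rw [Real.exp_le_one_iff]
            have h2 : 0 ≤ a * |ξ - s| := by positivity
            linarith
          have h2 : I.indicator (fun _ => (1:ℝ)) ξ = 1 :=
            Set.indicator_of_mem hξI (fun _ => (1:ℝ))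
          rw [hD3]
          have := Real.exp_pos (-a * |ξ - γA|)
          have := Real.exp_pos (-a * |ξ - γB|)
          dsimp only
          rw [h2]
          linarith
        · rw [hI, Set.mem_Icc, not_and_or, not_le, not_le] at hξI
          rcases hξI with hlt | hgt
          · -- ξ < min
            have hsmin : min γA γB ≤ s := hs.1
            rcases le_total γA γB with hAB | hAB
            · refine hcore γA (Or.inl rfl) ?_
              rw [min_eq_left hAB] at hlt hsmin
              rw [abs_sub_comm ξ γA, abs_of_nonneg (by linarith),
                abs_sub_comm ξ s, abs_of_nonneg (by linarith)]
              linarith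
            · refine hcore γB (Or.inr rfl) ?_
              rw [min_eq_right hAB] at hlt hsmin
              rw [abs_sub_comm ξ γB, abs_of_nonneg (by linarith),
                abs_sub_comm ξ s, abs_of_nonneg (by linarith)]
              linarith
          · -- max < ξ
            have hsmax : s ≤ max γA γB := hs.2
            rcases le_total γA γB with hAB | hAB
            · refine hcore γB (Or.inr rfl) ?_
              rw [max_eq_right hAB] at hgt hsmax
              rw [abs_of_nonneg (by linarith : (0:ℝ) ≤ ξ - γB),
                abs_of_nonneg (by linarith : (0:ℝ) ≤ ξ - s)]
              linarith
            · refine hcore γA (Or.inl rfl) ?_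
              rw [max_eq_left hAB] at hgt hsmax
              rw [abs_of_nonneg (by linarith : (0:ℝ) ≤ ξ - γA),
                abs_of_nonneg (by linarith : (0:ℝ) ≤ ξ - s)]
              linarith
      have hptA : ∀ ξ, ‖ψ (ξ - γA) - ψ (ξ - γB)‖ ≤ (M * D3 ξ) * L := by
        intro ξ
        have hbound : ∀ t ∈ I, ‖deriv (fun u => ψ (ξ - u)) t‖ ≤ M * D3 ξ := by
          intro t ht
          rw [(hderψ ξ t).deriv, norm_neg]
          refine (hφdecay (ξ - t)).trans ?_
          exact mul_le_mul_of_nonneg_left (hD3ge ξ t ht) hMpos.le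
        have hdf : ∀ t ∈ I, DifferentiableAt ℝ (fun u => ψ (ξ - u)) t :=
          fun t _ => (hderψ ξ t).differentiableAt
        have hmvt := Convex.norm_image_sub_le_of_norm_deriv_le hdf hbound (convex_Icc _ _) hmemB hmemA
        have hnrm : ‖γA - γB‖ = L := by rw [Real.norm_eq_abs, hL]
        rw [hnrm] at hmvt
        exact hmvt
      have hpt : ∀ ξ, ‖ψ (ξ - γA) - ψ (ξ - γB) + (γA - γB) • deriv ψ ξ‖
          ≤ (M * L) * (D3 ξ + Real.exp (-a * |ξ|)) := by
        intro ξ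
        refine (norm_add_le _ _).trans ?_
        have h1 := hptA ξ
        have h2 : ‖(γA - γB) • deriv ψ ξ‖ ≤ L * (M * Real.exp (-a * |ξ|)) := by
          rw [norm_smul, Real.norm_eq_abs, ← hL]
          exact mul_le_mul_of_nonneg_left (hφdecay ξ) hLnn
        have : M * D3 ξ * L + L * (M * Real.exp (-a * |ξ|))
            = (M * L) * (D3 ξ + Real.exp (-a * |ξ|)) := by ring
        linarith
      have hmA : MemLp (fun x : ℝ => Real.exp (-a * |x - γA|)) 2 volume := memL2_exp_shift ha γA
      have hmB : MemLp (fun x : ℝ => Real.exp (-a * |x - γB|)) 2 volume := memL2_exp_shift ha γB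
      have hmI : MemLp (I.indicator (fun _ => (1:ℝ))) 2 volume := by
        refine memLp_indicator_const 2 measurableSet_Icc (1:ℝ) (Or.inr ?_)
        rw [Real.volume_Icc]
        exact ENNReal.ofReal_ne_top
      have hmAB : MemLp (fun x : ℝ => Real.exp (-a * |x - γA|) + Real.exp (-a * |x - γB|)) 2 volume :=
        hmA.add hmB
      have hmD3 : MemLp D3 2 volume := hmAB.add hmI
      have hmD : MemLp (fun ξ => D3 ξ + Real.exp (-a * |ξ|)) 2 volume := hmD3.add hEmem
      have hmTot : MemLp (fun ξ : ℝ => (M * L) * (D3 ξ + Real.exp (-a * |ξ|))) 2 volume :=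
        hmD.const_mul _
      have h1 := l2norm_le_of_bound hmTot hpt
      refine h1.trans ?_
      rw [l2_smul]
      have habs : |M * L| = M * L := abs_of_nonneg (by positivity)
      rw [habs]
      -- bound the eLpNorm of the dominator
      have hstep1 : (eLpNorm (fun ξ => D3 ξ + Real.exp (-a * |ξ|)) 2 volume).toReal
          ≤ (eLpNorm D3 2 volume).toReal + E := by
        rw [hE]
        exact toReal_eLpNorm_add_le hmD3 hEmem
      have hstep2 : (eLpNorm D3 2 volume).toReal
          ≤ (eLpNorm (fun x : ℝ => Real.exp (-a * |x - γA|) + Real.exp (-a * |x - γB|)) 2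
              volume).toReal
            + (eLpNorm (I.indicator (fun _ => (1:ℝ))) 2 volume).toReal :=
        toReal_eLpNorm_add_le hmAB hmI
      have hstep3 : (eLpNorm (fun x : ℝ => Real.exp (-a * |x - γA|)
            + Real.exp (-a * |x - γB|)) 2 volume).toReal ≤ E + E := by
        refine (toReal_eLpNorm_add_le hmA hmB).trans ?_
        rw [eLpNorm_exp_shift γA, eLpNorm_exp_shift γB, hE]
      have hstep4 : (eLpNorm (I.indicator (fun _ => (1:ℝ))) 2 volume).toReal ≤ S := by
        rw [eLpNorm_indicator_const measurableSet_Icc two_ne_zero ENNReal.ofNat_ne_top]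
        rw [Real.volume_Icc, max_sub_min_eq_abs]
        rw [ENNReal.toReal_mul, ← ENNReal.toReal_rpow]
        simp only [nnnorm_one, enorm_one, ENNReal.coe_one, ENNReal.toReal_one, one_mul,
          ENNReal.toReal_ofReal (abs_nonneg (γB - γA))]
        have h2r : (1 / (2:ℝ≥0∞).toReal) = ((1:ℝ)/2) := by norm_num
        rw [h2r]
        have hLS' : |γB - γA| ≤ S := by rw [abs_sub_comm]; exact hLS
        have h1 : |γB - γA| ^ ((1:ℝ)/2) ≤ S ^ ((1:ℝ)/2) :=
          Real.rpow_le_rpow (abs_nonneg _) hLS' (by norm_num)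
        have h2 : S ^ ((1:ℝ)/2) ≤ S ^ (1:ℝ) :=
          Real.rpow_le_rpow_of_exponent_le hS1.le (by norm_num)
        rw [Real.rpow_one] at h2
        exact h1.trans h2
      have hDtot : (eLpNorm (fun ξ => D3 ξ + Real.exp (-a * |ξ|)) 2 volume).toReal
          ≤ 3 * E + S := by linarith
      calc M * L * (eLpNorm (fun ξ => D3 ξ + Real.exp (-a * |ξ|)) 2 volume).toReal
          ≤ M * L * (3 * E + S) := by
            refine mul_le_mul_of_nonneg_left hDtot (by positivity)
        _ ≤ K * S * L := by
            rw [hK]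
            nlinarith [mul_nonneg (mul_nonneg (mul_nonneg hMpos.le hLnn) hEnn)
                (by linarith : (0:ℝ) ≤ S - 1),
              mul_nonneg hSnn hLnn,
              mul_nonneg (mul_nonneg (mul_nonneg hCψ.le (Real.exp_pos a).le) hEnn)
                (mul_nonneg hSnn hLnn)]
  refine ⟨K, hKpos, ?_, main⟩
  intro γ
  have h := main γ 0
  have heq : (fun ξ => (ψ (ξ - γ) - ψ ξ + γ • deriv ψ ξ)
      - (ψ (ξ - 0) - ψ ξ + (0:ℝ) • deriv ψ ξ))
      = (fun ξ => ψ (ξ - γ) - ψ ξ + γ • deriv ψ ξ) := by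
    funext ξ; simp
  rw [heq] at h
  have hrhs : K * (|γ| + |0|) * |γ - 0| = K * γ^2 := by
    rw [abs_zero, add_zero, sub_zero, mul_assoc, abs_mul_abs_self, ← pow_two]
  rw [hrhs] at h
  exact h
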